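/- Suppose a recurrent network applies the same layer function repeatedly, where the state space is partitioned into D+1 segments each carrying a flag bit and a payload, and the transition function, given that segment i's flag is set and segment i+1's flag is unset, sets segment i+1's flag and writes g_i applied to segment i's payload into segment i+1's payload (for given functions g_1,...,g_D), leaving earlier segments unchanged. Then starting from the state with only segment 1 flagged and payload x, after D iterations segment D+1 is flagged with payload g_D(g_{D-1}(...g_1(x)...)). -/

import Mathlib

private def Pfun {S : Type*} (D : ℕ) (g : Fin D → S → S) (x : S) : ℕ → S
  | 0 => x
  | n+1 => if h : n < D then g ⟨n, h⟩ (Pfun D g x n) else Pfun D g x n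

private lemma Pfun_foldl {S : Type*} (D : ℕ) (g : Fin D → S → S) (x : S) :
    (List.finRange D).foldl (fun s i => g i s) x = Pfun D g x D := by
  have key : ∀ n, n ≤ D →
      ((List.finRange D).take n).foldl (fun s i => g i s) x = Pfun D g x n := by
    intro n hn
    induction n with
    | zero => simp [Pfun]
    | succ m ih =>
      have hm : m < D := hn
      have htake : (List.finRange D).take (m+1) =
          (List.finRange D).take m ++ [⟨m, hm⟩] := by
        rw [List.take_succ]
        congr 1
        rw [List.getElem?_eq_getElem (by simpa using hm)]
        simp [List.getElem_finRange, Fin.cast]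
      rw [htake, List.foldl_append, ih hm.le]
      simp [Pfun, hm]
  have := key D le_rfl
  rwa [List.take_of_length_le (by simp)] at this

/-- A recurrent network repeatedly applying one shared layer `T`
can sequence `D` distinct layers `g 0, …, g (D-1)`.  The state consists of `D+1`
segments, each a flag bit and a payload in `S`.  The transition `T` satisfies:
a flagged segment is left unchanged; if segment `i` is flagged and segment `i+1`
is not, then segment `i+1` becomes flagged with payload `g i` applied to segment
`i`'s payload; and an unflagged segment whose predecessor is unflagged is left
unchanged.  Starting from the state where only segment `0` is flagged, with
payload `x`, after `D` iterations the last segment is flagged and carries the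
composition `g_{D-1}(⋯ g_1(g_0(x)) ⋯)`. -/
theorem shared_layer_simulates_depth {S : Type*} (D : ℕ) (g : Fin D → S → S)
    (T : (Fin (D + 1) → Bool × S) → (Fin (D + 1) → Bool × S))
    (hfrozen : ∀ st (j : Fin (D + 1)), (st j).1 = true → T st j = st j)
    (hfire : ∀ st (i : Fin D), (st i.castSucc).1 = true → (st i.succ).1 = false →
      T st i.succ = (true, g i (st i.castSucc).2))
    (hwait : ∀ st (i : Fin D), (st i.castSucc).1 = false → (st i.succ).1 = false →
      T st i.succ = st i.succ)
    (x : S) (init : Fin (D + 1) → Bool × S)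
    (hinit0 : init 0 = (true, x))
    (hinit : ∀ j : Fin (D + 1), j ≠ 0 → (init j).1 = false) :
    (T^[D] init (Fin.last D)) =
      (true, (List.finRange D).foldl (fun s i => g i s) x) := by
  have key : ∀ k, k ≤ D → ∀ j : Fin (D + 1),
      ((j : ℕ) ≤ k → T^[k] init j = (true, Pfun D g x j)) ∧
      (k < (j : ℕ) → T^[k] init j = init j) := by
    intro k hk
    induction k with
    | zero =>
      intro j
      constructor
      · intro hj
        have : j = 0 := Fin.le_antisymm (by exact_mod_cast hj) (Fin.zero_le j)
        subst this
        simpa [Pfun] using hinit0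
      · intro _; simp
    | succ m ih =>
      have hm : m ≤ D := Nat.le_of_succ_le hk
      intro j
      rw [Function.iterate_succ_apply']
      set st := T^[m] init with hst
      constructor
      · intro hj
        rcases Nat.lt_or_ge (j : ℕ) (m+1) with hlt | hge
        · -- j ≤ m : frozen
          have h1 : st j = (true, Pfun D g x j) := (ih hm j).1 (Nat.lt_succ_iff.mp hlt)
          rw [hfrozen st j (by rw [h1]), h1]
        · -- j = m + 1 : fires
          have hjm : (j : ℕ) = m + 1 := le_antisymm hj hge
          have hmD : m < D := hk
          set i : Fin D := ⟨m, hmD⟩ with hi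
          have hcast : i.castSucc = ⟨m, Nat.lt_succ_of_lt hmD⟩ := rfl
          have hsucc : i.succ = j := by
            apply Fin.ext; simp [hi, hjm]
          have hprev : st i.castSucc = (true, Pfun D g x m) := by
            have := (ih hm i.castSucc).1 (by simp [hcast])
            simpa [hcast] using this
          have hcur : st j = init j := (ih hm j).2 (by omega)
          have hcurf : (st i.succ).1 = false := by
            rw [hsucc, hcur]
            exact hinit j (by intro h; rw [h] at hjm; simp at hjm)
          have := hfire st i (by rw [hprev]) hcurf
          rw [hsucc] at this
          rw [this, hprev]
          simp only [hjm, Pfun, hmD, dif_pos]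
          rfl
      · intro hj
        -- j > m + 1 : predecessor unflagged, waits
        have hj1 : 1 ≤ (j : ℕ) := by omega
        have hjD : (j : ℕ) - 1 < D := by
          have := j.isLt; omega
        set i : Fin D := ⟨(j : ℕ) - 1, hjD⟩ with hi
        have hsucc : i.succ = j := by apply Fin.ext; simp [hi]; omega
        have hcastv : ((i.castSucc : Fin (D+1)) : ℕ) = (j : ℕ) - 1 := rfl
        have hprev : st i.castSucc = init i.castSucc := by
          refine (ih hm i.castSucc).2 ?_
          rw [hcastv]; omega
        have hprevf : (st i.castSucc).1 = false := by
          rw [hprev]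
          refine hinit _ ?_
          intro h
          have := congrArg (Fin.val) h
          rw [hcastv] at this
          simp at this; omega
        have hcur : st j = init j := (ih hm j).2 (by omega)
        have hcurf : (st i.succ).1 = false := by
          rw [hsucc, hcur]
          exact hinit j (by intro h; rw [h] at hj1; simp at hj1)
        have := hwait st i hprevf hcurf
        rw [hsucc] at this
        rw [this, hcur]
  have := (key D le_rfl (Fin.last D)).1 (by simp)
  rw [this, Pfun_foldl]
  simp
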